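/- Let a, b be relatively prime positive integers and f(x) = (x^a − 1)(x^b − 1)/(x − 1) ∈ ℂ[x]. Then f is a power-polynomial: f(x) divides f(x^n) in ℂ[x] for every positive integer n. -/
import Mathlib

open Polynomial

theorem stmt10 (a b : ℕ) (ha : 0 < a) (hb : 0 < b) (hab : Nat.Coprime a b)
    (f : Polynomial ℂ)
    (hf : (Polynomial.X - 1) * f = (Polynomial.X ^ a - 1) * (Polynomial.X ^ b - 1)) :
    ∀ n : ℕ, 0 < n → f ∣ f.comp (Polynomial.X ^ n) := by
  intro n hn
  -- basic nonvanishing facts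
  have hA0 : (X ^ a - 1 : ℂ[X]) ≠ 0 := by
    intro h
    have := congrArg (Polynomial.eval 0) h
    simp [zero_pow ha.ne'] at this
  have hB0 : (X ^ b - 1 : ℂ[X]) ≠ 0 := by
    intro h
    have := congrArg (Polynomial.eval 0) h
    simp [zero_pow hb.ne'] at this
  have hX1 : (X - 1 : ℂ[X]) ≠ 0 := X_sub_C_ne_zero 1
  have hf0 : f ≠ 0 := by
    intro h
    rw [h, mul_zero] at hf
    exact hA0 ((mul_eq_zero.mp hf.symm).resolve_right hB0)
  -- f = (X^a - 1) * geometric sum of length b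
  have hgeom : (X - 1 : ℂ[X]) * (∑ i ∈ Finset.range b, X ^ i) = X ^ b - 1 := by
    simpa using mul_geom_sum (X : ℂ[X]) b
  have hS : f = (X ^ a - 1) * ∑ i ∈ Finset.range b, X ^ i := by
    apply mul_left_cancel₀ hX1
    rw [hf, ← hgeom]; ring
  have hf1 : f.eval 1 = 0 := by
    rw [hS]; simp
  -- common roots of X^a-1 and X^b-1 are only 1
  have hkey : ∀ z : ℂ, z ^ a = 1 → z ^ b = 1 → z = 1 := by
    intro z hza hzb
    have h1 : orderOf z ∣ a := orderOf_dvd_of_pow_eq_one hza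
    have h2 : orderOf z ∣ b := orderOf_dvd_of_pow_eq_one hzb
    have : orderOf z ∣ 1 := hab ▸ Nat.dvd_gcd h1 h2
    exact orderOf_eq_one_iff.mp (Nat.dvd_one.mp this)
  -- roots of X^m - 1 are nodup
  have hAsep : (X ^ a - 1 : ℂ[X]).Separable := by
    simpa using separable_X_pow_sub_C (1 : ℂ) (by exact_mod_cast Nat.cast_ne_zero.mpr ha.ne') one_ne_zero
  have hBsep : (X ^ b - 1 : ℂ[X]).Separable := by
    simpa using separable_X_pow_sub_C (1 : ℂ) (by exact_mod_cast Nat.cast_ne_zero.mpr hb.ne') one_ne_zero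
  have hAnd : (X ^ a - 1 : ℂ[X]).roots.Nodup := nodup_roots hAsep
  have hBnd : (X ^ b - 1 : ℂ[X]).roots.Nodup := nodup_roots hBsep
  -- root membership characterization
  have hmemA : ∀ z : ℂ, z ∈ (X ^ a - 1 : ℂ[X]).roots ↔ z ^ a = 1 := by
    intro z
    rw [mem_roots hA0]
    simp [IsRoot, sub_eq_zero]
  have hmemB : ∀ z : ℂ, z ∈ (X ^ b - 1 : ℂ[X]).roots ↔ z ^ b = 1 := by
    intro z
    rw [mem_roots hB0]
    simp [IsRoot, sub_eq_zero]
  -- multiset root equation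
  have hroots : ({1} : Multiset ℂ) + f.roots
      = (X ^ a - 1 : ℂ[X]).roots + (X ^ b - 1 : ℂ[X]).roots := by
    have h2 : (X - 1 : ℂ[X]).roots = {1} := by
      simpa using roots_X_sub_C (1 : ℂ)
    rw [← h2, ← roots_mul (show (X - 1 : ℂ[X]) * f ≠ 0 by rw [hf]; exact mul_ne_zero hA0 hB0),
      hf, roots_mul (mul_ne_zero hA0 hB0)]
  -- f.roots is nodup
  have hnd : f.roots.Nodup := by
    rw [Multiset.nodup_iff_count_le_one]
    intro z
    have hc := congrArg (Multiset.count z) hroots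
    simp only [Multiset.count_add] at hc
    by_cases hz : z = 1
    · subst hz
      have c1 : Multiset.count (1 : ℂ) ({1} : Multiset ℂ) = 1 := by simp
      have cA : Multiset.count (1 : ℂ) (X ^ a - 1 : ℂ[X]).roots = 1 :=
        Multiset.count_eq_one_of_mem hAnd ((hmemA 1).mpr (one_pow a))
      have cB : Multiset.count (1 : ℂ) (X ^ b - 1 : ℂ[X]).roots = 1 :=
        Multiset.count_eq_one_of_mem hBnd ((hmemB 1).mpr (one_pow b))
      omega
    · have c1 : Multiset.count z ({1} : Multiset ℂ) = 0 := by
        simp [Multiset.count_singleton, hz]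
      have cA : Multiset.count z (X ^ a - 1 : ℂ[X]).roots ≤ 1 :=
        Multiset.nodup_iff_count_le_one.mp hAnd z
      have cB : Multiset.count z (X ^ b - 1 : ℂ[X]).roots ≤ 1 :=
        Multiset.nodup_iff_count_le_one.mp hBnd z
      -- not both: else z = 1
      have : Multiset.count z (X ^ a - 1 : ℂ[X]).roots = 0 ∨
          Multiset.count z (X ^ b - 1 : ℂ[X]).roots = 0 := by
        by_contra h
        push_neg at h
        have hzA : z ∈ (X ^ a - 1 : ℂ[X]).roots := Multiset.count_pos.mp (Nat.pos_of_ne_zero h.1)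
        have hzB : z ∈ (X ^ b - 1 : ℂ[X]).roots := Multiset.count_pos.mp (Nat.pos_of_ne_zero h.2)
        exact hz (hkey z ((hmemA z).mp hzA) ((hmemB z).mp hzB))
      omega
  -- target nonzero
  have hg0 : f.comp (X ^ n) ≠ 0 := by
    intro h
    rw [comp_eq_zero_iff] at h
    rcases h with h | ⟨_, h⟩
    · exact hf0 h
    · have := congrArg natDegree h
      rw [natDegree_X_pow, natDegree_C] at this
      omega
  -- every root of f is a root of f.comp (X^n)
  have hsub : f.roots ⊆ (f.comp (X ^ n)).roots := by
    intro z hz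
    rw [mem_roots hg0, IsRoot, eval_comp, eval_pow, eval_X]
    set w := z ^ n with hw
    by_cases hw1 : w = 1
    · rw [hw1]; exact hf1
    · -- z is a root of X^a-1 or X^b-1
      have hzmem : z ∈ (X ^ a - 1 : ℂ[X]).roots + (X ^ b - 1 : ℂ[X]).roots := by
        rw [← hroots]
        exact Multiset.mem_add.mpr (Or.inr hz)
      have hwab : w ^ a = 1 ∨ w ^ b = 1 := by
        rcases Multiset.mem_add.mp hzmem with h | h
        · left
          have := (hmemA z).mp h
          rw [hw, ← pow_mul, mul_comm, pow_mul, this, one_pow]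
        · right
          have := (hmemB z).mp h
          rw [hw, ← pow_mul, mul_comm, pow_mul, this, one_pow]
      have heval := congrArg (Polynomial.eval w) hf
      simp only [eval_mul, eval_sub, eval_pow, eval_X, eval_one] at heval
      have hrhs : (w ^ a - 1) * (w ^ b - 1) = 0 := by
        rcases hwab with h | h
        · rw [h, sub_self, zero_mul]
        · rw [h, sub_self, mul_zero]
      rw [hrhs] at heval
      exact (mul_eq_zero.mp heval).resolve_left (sub_ne_zero.mpr hw1)
  exact (IsAlgClosed.splits f).dvd_of_roots_le_roots hf0
    ((Multiset.le_iff_subset hnd).mpr hsub)
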